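/- The degenerate Genocchi numbers are related to degenerate Bernoulli numbers by 𝓖_{n,λ} = 2(β_{n,λ} - 2^n β_{n,λ/2}) for all n ≥ 0. -/

import Mathlib

/-- The degenerate falling factorial `(x)_{n,λ} = x(x-λ)(x-2λ)⋯(x-(n-1)λ)`. -/
def degFall (l x : ℝ) : ℕ → ℝ
  | 0 => 1
  | n + 1 => degFall l x n * (x - n * l)

/-- The degenerate rising factorial `⟨x⟩_{n,λ} = x(x+λ)(x+2λ)⋯(x+(n-1)λ)`. -/
def degRise (l x : ℝ) : ℕ → ℝ
  | 0 => 1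
  | n + 1 => degRise l x n * (x + n * l)

/-- The degenerate exponential `e_λ^x(t) = Σ (x)_{n,λ} tⁿ/n!` as a formal power series. -/
noncomputable def degExp (l x : ℝ) : PowerSeries ℝ :=
  PowerSeries.mk fun n => degFall l x n / n.factorial

lemma degFall_vandermonde (l x y : ℝ) (n : ℕ) :
    degFall l (x + y) n =
      ∑ k ∈ Finset.range (n + 1), (n.choose k : ℝ) * degFall l x k * degFall l y (n - k) := by
  induction n with
  | zero => simp [degFall]
  | succ n ih =>
    have LHS : degFall l (x + y) (n + 1)
        = (∑ k ∈ Finset.range (n + 1), (n.choose k : ℝ) * degFall l x (k+1) * degFall l y (n - k))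
        + ∑ k ∈ Finset.range (n + 1), (n.choose k : ℝ) * degFall l x k * degFall l y (n + 1 - k) := by
      show degFall l (x+y) n * (x + y - n * l) = _
      rw [ih, Finset.sum_mul, ← Finset.sum_add_distrib]
      apply Finset.sum_congr rfl
      intro k hk
      have hk' : k ≤ n := Nat.lt_succ_iff.mp (Finset.mem_range.mp hk)
      have h1 : degFall l x (k+1) = degFall l x k * (x - k*l) := rfl
      have h2 : degFall l y (n+1-k) = degFall l y (n-k) * (y - ((n-k:ℕ):ℝ)*l) := by
        rw [show n+1-k = (n-k)+1 from by omega]; rfl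
      have hcast : ((n-k : ℕ) : ℝ) = (n:ℝ) - k := by
        rw [Nat.cast_sub hk']
      rw [h1, h2, hcast]; ring
    rw [LHS]
    rw [Finset.sum_range_succ' (fun k => ((n+1).choose k : ℝ) * degFall l x k * degFall l y (n + 1 - k)) (n+1)]
    simp only [Nat.choose_succ_succ, Nat.cast_add, add_mul, Nat.choose_zero_right,
      Nat.cast_one, one_mul]
    rw [Finset.sum_add_distrib]
    have h2 : (∑ k ∈ Finset.range (n + 1), (n.choose (k+1) : ℝ) * degFall l x (k+1) * degFall l y (n - k))
        + degFall l x 0 * degFall l y (n+1)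
        = ∑ k ∈ Finset.range (n + 1), (n.choose k : ℝ) * degFall l x k * degFall l y (n + 1 - k) := by
      rw [Finset.sum_range_succ' (fun k => (n.choose k : ℝ) * degFall l x k * degFall l y (n + 1 - k)) n,
        Finset.sum_range_succ]
      simp [degFall]
    simp only [Nat.succ_sub_succ, Nat.sub_zero, Nat.succ_eq_add_one] at h2 ⊢
    rw [add_assoc, h2]

lemma degFall_two (l : ℝ) (n : ℕ) : degFall l 2 n = 2 ^ n * degFall (l/2) 1 n := by
  induction n with
  | zero => simp [degFall]
  | succ n ih =>
    show degFall l 2 n * (2 - n * l) = 2 ^ (n+1) * (degFall (l/2) 1 n * (1 - n * (l/2)))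
    rw [ih]; ring

lemma rescale_degExp (l : ℝ) :
    PowerSeries.rescale 2 (degExp (l/2) 1) = (degExp l 1) ^ 2 := by
  ext n
  rw [PowerSeries.coeff_rescale, pow_two, PowerSeries.coeff_mul]
  simp only [degExp, PowerSeries.coeff_mk]
  rw [Finset.Nat.sum_antidiagonal_eq_sum_range_succ_mk]
  have key : (2:ℝ)^n * degFall (l/2) 1 n = degFall l 2 n := (degFall_two l n).symm
  rw [← mul_div_assoc, key, show (2:ℝ) = 1 + 1 from by norm_num, degFall_vandermonde,
    Finset.sum_div]
  apply Finset.sum_congr rfl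
  intro k hk
  have hk' : k ≤ n := Nat.lt_succ_iff.mp (Finset.mem_range.mp hk)
  rw [Nat.cast_choose ℝ hk']
  field_simp

lemma rescale_two_X : PowerSeries.rescale (2:ℝ) PowerSeries.X = 2 * PowerSeries.X := by
  ext m
  rw [PowerSeries.coeff_rescale]
  rw [show (2 : PowerSeries ℝ) = PowerSeries.C (R := ℝ) 2 from (map_ofNat (PowerSeries.C (R := ℝ)) 2).symm,
    PowerSeries.coeff_C_mul]
  simp only [PowerSeries.coeff_X]
  split <;> simp_all

lemma degExp_one_sub_one_ne : ∀ l : ℝ, degExp l 1 - 1 ≠ 0 := by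
  intro l h
  have := congrArg (PowerSeries.coeff (R := ℝ) 1) h
  simp [degExp, PowerSeries.coeff_mk, degFall, PowerSeries.coeff_one] at this

lemma degExp_one_add_one_ne : ∀ l : ℝ, degExp l 1 + 1 ≠ 0 := by
  intro l h
  have := congrArg (PowerSeries.coeff (R := ℝ) 0) h
  simp [degExp, PowerSeries.coeff_mk, degFall, PowerSeries.coeff_one] at this

theorem degGenocchi_eq_degBernoulli (l : ℝ) (hl : l ≠ 0) (B B' G : ℕ → ℝ)
    (hB : (degExp l 1 - 1) * PowerSeries.mk (fun n => B n / n.factorial) = PowerSeries.X)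
    (hB' : (degExp (l / 2) 1 - 1) * PowerSeries.mk (fun n => B' n / n.factorial)
        = PowerSeries.X)
    (hG : (degExp l 1 + 1) * PowerSeries.mk (fun n => G n / n.factorial)
        = 2 * PowerSeries.X)
    (n : ℕ) :
    G n = 2 * (B n - 2 ^ n * B' n) := by
  set E := degExp l 1 with hE
  set S := PowerSeries.mk (fun n => B n / n.factorial) with hS
  set T := PowerSeries.mk (fun n => G n / n.factorial) with hT
  set U := PowerSeries.mk (fun n => (2:ℝ)^n * B' n / n.factorial) with hUdef
  have hresc : PowerSeries.rescale (2:ℝ) (PowerSeries.mk (fun n => B' n / n.factorial)) = U := by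
    ext m
    simp [PowerSeries.coeff_rescale, hUdef, mul_div_assoc]
  have hU : (E^2 - 1) * U = 2 * PowerSeries.X := by
    have := congrArg (PowerSeries.rescale (2:ℝ)) hB'
    rw [map_mul, map_sub, map_one, rescale_degExp, hresc, rescale_two_X] at this
    exact this
  have hne : E^2 - 1 ≠ 0 := by
    have : E^2 - 1 = (E - 1) * (E + 1) := by ring
    rw [this]
    exact mul_ne_zero (degExp_one_sub_one_ne l) (degExp_one_add_one_ne l)
  have key : (E^2 - 1) * T = (E^2 - 1) * (2 * S - 2 * U) := by
    linear_combination (E - 1) * hG - 2 * (E + 1) * hB + 2 * hU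
  have hTeq : T = 2 * S - 2 * U := mul_left_cancel₀ hne key
  have hc := congrArg (PowerSeries.coeff (R := ℝ) n) hTeq
  rw [show (2 : PowerSeries ℝ) = PowerSeries.C (R := ℝ) 2 from (map_ofNat (PowerSeries.C (R := ℝ)) 2).symm]
    at hc
  simp only [hT, hS, hUdef, map_sub, PowerSeries.coeff_C_mul, PowerSeries.coeff_mk] at hc
  have hfac : ((n.factorial : ℝ)) ≠ 0 := Nat.cast_ne_zero.mpr n.factorial_ne_zero
  field_simp at hc
  linarith
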